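/- Let f : ℂ → ℂ be entire, let a, b ∈ ℝ and z ∈ ℂ. Then the series ∑_{k=0}^∞ (a^k · cos(b + kπ/2) / k!) · f^{(k)}(z) converges, with sum (1/2)·(e^{ib}·f(z + ia) + e^{-ib}·f(z - ia)); i.e., HasSum (fun k => (a^k * cos(b + k*π/2) / k!) * f^{(k)}(z)) ((e^{ib} * f(z + a*I) + e^{-ib} * f(z - a*I)) / 2). -/

import Mathlib

open Complex Real

lemma coeff_key (a b : ℝ) (k : ℕ) :
    ((a ^ k * Real.cos (b + k * Real.pi / 2) / (Nat.factorial k) : ℝ) : ℂ)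
      = (Complex.exp (b * Complex.I) * ((Nat.factorial k : ℂ)⁻¹ * (a * Complex.I) ^ k)
        + Complex.exp (-(b * Complex.I)) * ((Nat.factorial k : ℂ)⁻¹ * (-(a * Complex.I)) ^ k)) / 2 := by
  have hI : Complex.I = Complex.exp ((Real.pi / 2 : ℝ) * Complex.I) := by
    rw [Complex.exp_mul_I]
    simp [← Complex.ofReal_cos, ← Complex.ofReal_sin]
  have hnI : -Complex.I = Complex.exp (-((Real.pi / 2 : ℝ) * Complex.I)) := by
    rw [show -((Real.pi / 2 : ℝ) * Complex.I) = ((-(Real.pi / 2) : ℝ) : ℂ) * Complex.I by push_cast; ring,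
      Complex.exp_mul_I]
    simp [← Complex.ofReal_cos, ← Complex.ofReal_sin]
  have hIk : (Complex.I) ^ k = Complex.exp ((k : ℂ) * ((Real.pi / 2 : ℝ) * Complex.I)) := by
    rw [Complex.exp_nat_mul, ← hI]
  have hnIk : (-Complex.I) ^ k = Complex.exp (-((k : ℂ) * ((Real.pi / 2 : ℝ) * Complex.I))) := by
    rw [show -((k : ℂ) * ((Real.pi / 2 : ℝ) * Complex.I)) = (k : ℂ) * (-((Real.pi / 2 : ℝ) * Complex.I)) by ring,
      Complex.exp_nat_mul, ← hnI]
  have hcos : ((Real.cos (b + k * Real.pi / 2) : ℝ) : ℂ)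
      = (Complex.exp ((b : ℂ) * Complex.I + (k : ℂ) * ((Real.pi / 2 : ℝ) * Complex.I))
        + Complex.exp (-((b : ℂ) * Complex.I + (k : ℂ) * ((Real.pi / 2 : ℝ) * Complex.I)))) / 2 := by
    rw [Complex.ofReal_cos, Complex.cos]
    congr 2
    · push_cast; ring
    · push_cast; ring
  rw [show -((a : ℂ) * Complex.I) = (a : ℂ) * (-Complex.I) by ring,
    mul_pow (a : ℂ) (-Complex.I) k, hnIk, mul_pow, hIk]
  push_cast [hcos]
  simp only [neg_add, Complex.exp_add]
  field_simp

theorem cos_operator (f : ℂ → ℂ) (hf : Differentiable ℂ f) (a b : ℝ) (z : ℂ) :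
    HasSum
      (fun k : ℕ => ((a ^ k * Real.cos (b + k * Real.pi / 2) / (Nat.factorial k) : ℝ) : ℂ)
        * iteratedDeriv k f z)
      ((Complex.exp (b * Complex.I) * f (z + a * Complex.I)
        + Complex.exp (-(b * Complex.I)) * f (z - a * Complex.I)) / 2) := by
  have h1 := Complex.hasSum_taylorSeries_of_entire hf z (z + a * Complex.I)
  have h2 := Complex.hasSum_taylorSeries_of_entire hf z (z - a * Complex.I)
  simp only [add_sub_cancel_left, sub_sub_cancel_left, smul_eq_mul] at h1 h2
  have h := ((h1.mul_left (Complex.exp (b * Complex.I))).add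
    (h2.mul_left (Complex.exp (-(b * Complex.I))))).div_const 2
  convert h using 2 with k
  case e'_3 => rfl
  rw [coeff_key]
  ring
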